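/- Let $1 \leq m < n$ and $k \geq 1$ be integers, $0 \leq \alpha \leq 1$, let $A \subseteq \mathbb{R}^m$ be Lebesgue measurable and let $f : A \to \mathbb{R}^{n-m}$ be measurable. If there exist countably many functions $g_j : \mathbb{R}^m \to \mathbb{R}^{n-m}$ of class $C^{k,\alpha}$ such that $\mathcal{L}^m(A \setminus \bigcup_{j=1}^\infty \{x : g_j(x) = f(x)\}) = 0$, then $f$ is approximately differentiable of order $(k,\alpha)$ at $\mathcal{L}^m$-almost every $a \in A$. -/

import Mathlib

open MeasureTheory Metric Filter Set
open scoped ENNReal Topology NNReal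

/-- The set `S` has `m`-dimensional Lebesgue density `0` at `a`. -/
def DensityZero {m : ℕ} (S : Set (EuclideanSpace ℝ (Fin m)))
    (a : EuclideanSpace ℝ (Fin m)) : Prop :=
  Filter.Tendsto (fun r : ℝ =>
    volume (S ∩ Metric.closedBall a r) / volume (Metric.closedBall a r))
    (𝓝[>] (0 : ℝ)) (𝓝 0)

/-- `P` is a polynomial function of degree at most `k`. -/
def PolyDegLE {E F : Type*} [NormedAddCommGroup E] [NormedSpace ℝ E]
    [NormedAddCommGroup F] [NormedSpace ℝ F] (k : ℕ) (P : E → F) : Prop :=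
  ∃ φ : ∀ i : ℕ, ContinuousMultilinearMap ℝ (fun _ : Fin i => E) F,
    ∀ x, P x = ∑ i ∈ Finset.range (k + 1), φ i (fun _ => x)

/-- `f : A → F` is approximately differentiable of order `(k, α)` at `a`. -/
def ApproxDiffAt {m : ℕ} {F : Type*} [NormedAddCommGroup F] [NormedSpace ℝ F]
    (k : ℕ) (α : ℝ) (A : Set (EuclideanSpace ℝ (Fin m)))
    (f : EuclideanSpace ℝ (Fin m) → F) (a : EuclideanSpace ℝ (Fin m)) : Prop :=
  DensityZero Aᶜ a ∧
  ∃ P : EuclideanSpace ℝ (Fin m) → F, PolyDegLE k P ∧ (a ∈ A → P a = f a) ∧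
    (α = 0 → ∀ ε : ℝ, 0 < ε →
      DensityZero {x | x ∈ A ∧ ε * ‖x - a‖ ^ (k : ℝ) < ‖f x - P x‖} a) ∧
    (α ≠ 0 → ∃ lam : ℝ, 0 ≤ lam ∧
      DensityZero {x | x ∈ A ∧ lam * ‖x - a‖ ^ ((k : ℝ) + α) < ‖f x - P x‖} a)

/-- `g` is of class `(k, α)`: of class `C^k`, with `D^k g` locally Hölder
continuous with exponent `α` when `α ≠ 0`. -/
def ClassKAlpha {E F : Type*} [NormedAddCommGroup E] [NormedSpace ℝ E]
    [NormedAddCommGroup F] [NormedSpace ℝ F] (k : ℕ) (α : ℝ) (g : E → F) : Prop :=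
  ContDiff ℝ k g ∧ (α ≠ 0 → ∀ x : E, ∃ U ∈ 𝓝 x, ∃ C : ℝ≥0,
    HolderOnWith C α.toNNReal (iteratedFDeriv ℝ k g) U)

/-! ### Auxiliary lemmas -/

/-- Evaluation of a continuous multilinear map at a fixed tuple, as a continuous
linear map. -/
noncomputable def evalCLM {E F : Type*} [NormedAddCommGroup E] [NormedSpace ℝ E]
    [NormedAddCommGroup F] [NormedSpace ℝ F] {j : ℕ} (m : Fin j → E) :
    ContinuousMultilinearMap ℝ (fun _ : Fin j => E) F →L[ℝ] F :=
  LinearMap.mkContinuous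
    { toFun := fun c => c m
      map_add' := fun _ _ => rfl
      map_smul' := fun _ _ => rfl } (∏ i, ‖m i‖)
    (fun c => (c.le_opNorm m).trans_eq (mul_comm _ _))

section Taylor

variable {E F : Type*} [NormedAddCommGroup E] [NormedSpace ℝ E]
    [NormedAddCommGroup F] [NormedSpace ℝ F]

lemma hasDerivAt_w {k j : ℕ} {h : E → F} (hh : ContDiff ℝ k h) (hj : j < k)
    (a v : E) (t : ℝ) :
    HasDerivAt (fun t : ℝ => iteratedFDeriv ℝ j h (a + t • v) (fun _ => v))
      (iteratedFDeriv ℝ (j+1) h (a + t • v) (fun _ => v)) t := by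
  have l1 : HasDerivAt (fun t : ℝ => a + t • v) v t := by
    simpa using ((hasDerivAt_id t).smul_const v).const_add a
  have hdiff : Differentiable ℝ (iteratedFDeriv ℝ j h) :=
    hh.differentiable_iteratedFDeriv (by exact_mod_cast hj)
  have l2 : HasFDerivAt (iteratedFDeriv ℝ j h)
      (fderiv ℝ (iteratedFDeriv ℝ j h) (a + t • v)) (a + t • v) :=
    (hdiff (a + t • v)).hasFDerivAt
  have l3 := (evalCLM (F := F) (fun _ : Fin j => v)).hasFDerivAt.comp_hasDerivAt t
    (l2.comp_hasDerivAt t l1)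
  convert l3 using 1
  · rfl
  · rw [iteratedFDeriv_succ_apply_left]
    rfl

lemma rpow_mul_self {t : ℝ} (ht : 0 ≤ t) (c : ℝ) (hc : 0 ≤ c) :
    t ^ c * t = t ^ (c + 1) := by
  rcases eq_or_lt_of_le ht with h | h
  · rw [← h, mul_zero, Real.zero_rpow (by positivity : c + 1 ≠ 0)]
  · rw [Real.rpow_add h, Real.rpow_one]

/-- Quantitative Taylor estimate: if the `k`-th derivative of `h` satisfies
`‖D^k h x - D^k h a‖ ≤ C‖x - a‖ ^ β` on a ball, then the Taylor remainder of
order `k` at `a` is bounded by `C ‖x - a‖ ^ (k + β)` on that ball. -/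
lemma taylor_est (k : ℕ) (hk : 1 ≤ k) (h : E → F) (hh : ContDiff ℝ k h) (a : E)
    (r C β : ℝ) (hC : 0 ≤ C) (hβ : 0 ≤ β)
    (hb : ∀ x ∈ ball a r, ‖iteratedFDeriv ℝ k h x - iteratedFDeriv ℝ k h a‖ ≤ C * ‖x - a‖ ^ β)
    (x : E) (hx : x ∈ ball a r) :
    ‖h x - ∑ i ∈ Finset.range (k+1),
        (Nat.factorial i : ℝ)⁻¹ • iteratedFDeriv ℝ i h a (fun _ => x - a)‖
      ≤ C * ‖x - a‖ ^ ((k : ℝ) + β) := by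
  set v := x - a with hv
  have hvr : ‖v‖ < r := by simpa [hv, mem_ball, dist_eq_norm] using hx
  have hmem : ∀ t ∈ Icc (0:ℝ) 1, a + t • v ∈ ball a r := by
    intro t ht
    simp only [mem_ball, dist_eq_norm, add_sub_cancel_left]
    calc ‖t • v‖ = t * ‖v‖ := by rw [norm_smul, Real.norm_of_nonneg ht.1]
    _ ≤ 1 * ‖v‖ := by apply mul_le_mul_of_nonneg_right ht.2 (norm_nonneg _)
    _ < r := by simpa using hvr
  set w : ℕ → ℝ → F := fun j t => iteratedFDeriv ℝ j h (a + t • v) (fun _ => v) with hw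
  have key : ∀ d, d ≤ k → ∀ t ∈ Icc (0:ℝ) 1,
      ‖w (k-d) t - ∑ i ∈ Finset.range (d+1), ((t^i / Nat.factorial i) : ℝ) • w (i + (k-d)) 0‖
        ≤ (C * ‖v‖ ^ ((k:ℝ) + β)) * t ^ ((d:ℝ) + β) := by
    intro d
    induction d with
    | zero =>
      intro _ t ht
      simp only [Nat.cast_zero]
      have : ∑ i ∈ Finset.range 1, ((t^i / Nat.factorial i) : ℝ) • w (i + (k-0)) 0 = w k 0 := by
        simp
      rw [this, Nat.sub_zero]
      have h1 : w k t - w k 0 =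
          (iteratedFDeriv ℝ k h (a + t • v) - iteratedFDeriv ℝ k h a) (fun _ => v) := by
        simp [hw, ContinuousMultilinearMap.sub_apply]
      rw [h1]
      calc ‖(iteratedFDeriv ℝ k h (a + t • v) - iteratedFDeriv ℝ k h a) (fun _ => v)‖
          ≤ ‖iteratedFDeriv ℝ k h (a + t • v) - iteratedFDeriv ℝ k h a‖ * ∏ _i : Fin k, ‖v‖ :=
            ContinuousMultilinearMap.le_opNorm _ _
        _ ≤ (C * ‖(a + t • v) - a‖ ^ β) * ‖v‖ ^ k := by
            apply mul_le_mul (hb _ (hmem t ht)) (by simp [Finset.prod_const]) (by positivity)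
            positivity
        _ = (C * ‖v‖ ^ ((k:ℝ) + β)) * t ^ ((0:ℝ) + β) := by
            rw [add_sub_cancel_left, norm_smul, Real.norm_of_nonneg ht.1,
              Real.mul_rpow ht.1 (norm_nonneg v), Real.rpow_add' (norm_nonneg v)
                (by positivity), zero_add, ← Real.rpow_natCast ‖v‖ k]
            ring
    | succ d ih =>
      intro hdk t ht
      have hd : d ≤ k := le_of_lt (Nat.lt_of_lt_of_le (Nat.lt_succ_self d) hdk)
      have hsub : k - (d+1) + 1 = k - d := by omega
      set j := k - (d+1) with hj
      have hjk : j < k := by omega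
      set S : ℝ → F := fun t => w j t
          - ∑ i ∈ Finset.range (d+2), ((t^i / Nat.factorial i) : ℝ) • w (i + j) 0 with hS
      have hderiv : ∀ s : ℝ, HasDerivAt S
          (w (j+1) s
            - ∑ i ∈ Finset.range (d+1), ((s^i / Nat.factorial i) : ℝ) • w (i + (j+1)) 0) s := by
        intro s
        have h1 : HasDerivAt (fun t => w j t) (w (j+1) s) s := hasDerivAt_w hh hjk a v s
        have h2 : HasDerivAt
            (fun t => ∑ i ∈ Finset.range (d+2), ((t^i / Nat.factorial i) : ℝ) • w (i + j) 0)
            (∑ i ∈ Finset.range (d+1), ((s^i / Nat.factorial i) : ℝ) • w (i + (j+1)) 0) s := by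
          have h3 : HasDerivAt
              (fun t => ∑ i ∈ Finset.range (d+2), ((t^i / Nat.factorial i) : ℝ) • w (i + j) 0)
              (∑ i ∈ Finset.range (d+2), ((i * s^(i-1) / Nat.factorial i) : ℝ) • w (i + j) 0)
              s := by
            apply HasDerivAt.fun_sum
            intro i _
            exact (((hasDerivAt_pow i s).div_const (Nat.factorial i : ℝ)).smul_const (w (i+j) 0))
          have hre : ∑ i ∈ Finset.range (d+2), ((i * s^(i-1) / Nat.factorial i : ℝ)) • w (i + j) 0
              = ∑ i ∈ Finset.range (d+1), ((s^i / Nat.factorial i : ℝ)) • w (i + (j+1)) 0 := by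
            rw [Finset.sum_range_succ']
            simp only [Nat.cast_zero, zero_mul, zero_div, zero_smul, add_zero,
              Nat.add_sub_cancel, Nat.cast_add, Nat.cast_one]
            apply Finset.sum_congr rfl
            intro i _
            have he : i + 1 + j = i + (j + 1) := by omega
            rw [he, Nat.factorial_succ, Nat.cast_mul, Nat.cast_add, Nat.cast_one,
              mul_div_mul_left _ _ (by positivity : ((i:ℝ)+1) ≠ 0)]
          rw [hre] at h3
          exact h3
        exact h1.sub h2
      have hS0 : S 0 = 0 := by
        have : ∑ i ∈ Finset.range (d+2), (((0:ℝ)^i / Nat.factorial i) : ℝ) • w (i + j) 0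
            = w j 0 := by
          rw [Finset.sum_eq_single_of_mem 0 (by simp)]
          · simp
          · intro i _ hi
            simp [zero_pow hi]
        simp [hS, this]
      have bound : ∀ s ∈ Icc (0:ℝ) t, ‖w (j+1) s - ∑ i ∈ Finset.range (d+1),
          ((s^i / Nat.factorial i) : ℝ) • w (i + (j+1)) 0‖
            ≤ (C * ‖v‖ ^ ((k:ℝ) + β)) * t ^ ((d:ℝ) + β) := by
        intro s hs
        have hs1 : s ∈ Icc (0:ℝ) 1 := ⟨hs.1, le_trans hs.2 ht.2⟩
        have := ih hd s hs1
        rw [← hsub] at this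
        refine le_trans (by exact this) ?_
        apply mul_le_mul_of_nonneg_left _ (by positivity)
        exact Real.rpow_le_rpow hs.1 hs.2 (by positivity)
      have hST := norm_image_sub_le_of_norm_deriv_le_segment' (f := S)
        (f' := fun s => w (j+1) s
          - ∑ i ∈ Finset.range (d+1), ((s^i / Nat.factorial i) : ℝ) • w (i + (j+1)) 0)
        (a := 0) (b := t) (fun s _ => (hderiv s).hasDerivWithinAt)
        (fun s hs => bound s (Ico_subset_Icc_self hs)) t (right_mem_Icc.2 ht.1)
      rw [hS0, sub_zero, sub_zero] at hST
      calc ‖S t‖ ≤ (C * ‖v‖ ^ ((k:ℝ) + β)) * t ^ ((d:ℝ) + β) * t := hST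
        _ = (C * ‖v‖ ^ ((k:ℝ) + β)) * (t ^ ((d:ℝ) + β) * t) := by ring
        _ = (C * ‖v‖ ^ ((k:ℝ) + β)) * t ^ (((d+1:ℕ):ℝ) + β) := by
            have he : ((d+1:ℕ):ℝ) + β = ((d:ℝ) + β) + 1 := by push_cast; ring
            rw [he, ← rpow_mul_self ht.1 _ (by positivity)]
  have final := key k le_rfl 1 (by norm_num)
  simp only [Nat.sub_self, Real.one_rpow, mul_one] at final
  have hw0 : w 0 1 = h x := by simp [hw, hv]
  have hsum : ∑ i ∈ Finset.range (k+1), (((1:ℝ)^i / Nat.factorial i)) • w (i+0) 0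
      = ∑ i ∈ Finset.range (k+1), (Nat.factorial i : ℝ)⁻¹ • iteratedFDeriv ℝ i h a (fun _ => v) := by
    apply Finset.sum_congr rfl
    intro i _
    simp [hw, one_div]
  rw [hw0, hsum] at final
  exact final

/-- A translated diagonal sum of multilinear maps is a polynomial of degree at
most `k` in the sense of `PolyDegLE`. -/
lemma polyDegLE_shift (k : ℕ)
    (c : ∀ i : ℕ, ContinuousMultilinearMap ℝ (fun _ : Fin i => E) F) (a : E) :
    PolyDegLE k (fun x => ∑ i ∈ Finset.range (k+1), c i (fun _ => x - a)) := by
  classical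
  refine ⟨fun j => ∑ i ∈ Finset.range (k+1),
    ∑ s ∈ (Finset.univ.filter (fun s : Finset (Fin i) => s.card = j)).attach,
      (c i).restr s.1 (Finset.mem_filter.mp s.2).2 (-a), fun x => ?_⟩
  have expand : ∀ i : ℕ, c i (fun _ => x - a)
      = ∑ s : Finset (Fin i), (c i) (s.piecewise (fun _ => x) (fun _ => -a)) := by
    intro i
    have hfe : (fun _ : Fin i => x - a) = (fun _ => x) + (fun _ => -a) := by
      funext _; simp [sub_eq_add_neg]
    rw [hfe]
    exact (c i).toMultilinearMap.map_add_univ _ _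
  have restr_apply : ∀ (i j : ℕ) (s : Finset (Fin i)) (hs : s.card = j),
      (c i).restr s hs (-a) (fun _ => x) = c i (s.piecewise (fun _ => x) (fun _ => -a)) := by
    intro i j s hs
    show c i _ = c i _
    congr 1
  calc (∑ i ∈ Finset.range (k+1), c i (fun _ => x - a))
      = ∑ i ∈ Finset.range (k+1), ∑ s : Finset (Fin i),
          (c i) (s.piecewise (fun _ => x) (fun _ => -a)) := by
        exact Finset.sum_congr rfl (fun i _ => expand i)
    _ = ∑ i ∈ Finset.range (k+1), ∑ j ∈ Finset.range (k+1),
          ∑ s ∈ Finset.univ.filter (fun s : Finset (Fin i) => s.card = j),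
          (c i) (s.piecewise (fun _ => x) (fun _ => -a)) := by
        refine Finset.sum_congr rfl (fun i hi => ?_)
        rw [Finset.sum_fiberwise_of_maps_to]
        intro s _
        simp only [Finset.mem_range]
        have h1 : s.card ≤ i := by
          simpa using Finset.card_le_card (Finset.subset_univ s)
        have h2 : i ≤ k := by simpa [Nat.lt_succ_iff] using hi
        omega
    _ = ∑ j ∈ Finset.range (k+1), ∑ i ∈ Finset.range (k+1),
          ∑ s ∈ Finset.univ.filter (fun s : Finset (Fin i) => s.card = j),
          (c i) (s.piecewise (fun _ => x) (fun _ => -a)) := Finset.sum_comm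
    _ = ∑ j ∈ Finset.range (k+1), (∑ i ∈ Finset.range (k+1),
          ∑ s ∈ (Finset.univ.filter (fun s : Finset (Fin i) => s.card = j)).attach,
          (c i).restr s.1 (Finset.mem_filter.mp s.2).2 (-a)) (fun _ => x) := by
        refine Finset.sum_congr rfl (fun j _ => ?_)
        rw [ContinuousMultilinearMap.sum_apply]
        refine Finset.sum_congr rfl (fun i _ => ?_)
        rw [ContinuousMultilinearMap.sum_apply]
        rw [← Finset.sum_attach (Finset.univ.filter (fun s : Finset (Fin i) => s.card = j))
          (fun s => (c i) (s.piecewise (fun _ => x) (fun _ => -a)))]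
        exact Finset.sum_congr rfl
          (fun s _ => (restr_apply i j s.1 (Finset.mem_filter.mp s.2).2).symm)

end Taylor

lemma densityZero_mono {m : ℕ} {S T : Set (EuclideanSpace ℝ (Fin m))}
    {a : EuclideanSpace ℝ (Fin m)} (h : DensityZero T a)
    (hsub : ∀ᶠ r in 𝓝[>] (0:ℝ), S ∩ closedBall a r ⊆ T ∩ closedBall a r) :
    DensityZero S a := by
  apply tendsto_of_tendsto_of_tendsto_of_le_of_le' tendsto_const_nhds h
  · filter_upwards with r using zero_le
  · filter_upwards [hsub] with r hr
    exact ENNReal.div_le_div_right (measure_mono hr) _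

lemma densityZero_compl {m : ℕ} {S : Set (EuclideanSpace ℝ (Fin m))}
    (hS : MeasurableSet S) {a : EuclideanSpace ℝ (Fin m)}
    (h : Tendsto (fun r : ℝ => volume (S ∩ closedBall a r) / volume (closedBall a r))
      (𝓝[>] (0:ℝ)) (𝓝 1)) : DensityZero Sᶜ a := by
  have key : ∀ᶠ r in 𝓝[>] (0:ℝ),
      volume (Sᶜ ∩ closedBall a r) / volume (closedBall a r)
        = 1 - volume (S ∩ closedBall a r) / volume (closedBall a r) := by
    filter_upwards [self_mem_nhdsWithin] with r (hr : 0 < r)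
    have hB0 : volume (closedBall a r) ≠ 0 := (measure_closedBall_pos volume a hr).ne'
    have hBT : volume (closedBall a r) ≠ ⊤ := measure_closedBall_lt_top.ne
    have hsum : volume (S ∩ closedBall a r) / volume (closedBall a r)
        + volume (Sᶜ ∩ closedBall a r) / volume (closedBall a r) = 1 := by
      rw [ENNReal.div_add_div_same, inter_comm S, inter_comm Sᶜ,
        ← Set.diff_eq, measure_inter_add_diff (closedBall a r) hS,
        ENNReal.div_self hB0 hBT]
    have hfin : volume (S ∩ closedBall a r) / volume (closedBall a r) ≠ ⊤ :=
      (ENNReal.div_lt_top (ne_top_of_le_ne_top hBT (measure_mono inter_subset_right)) hB0).ne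
    exact ENNReal.eq_sub_of_add_eq hfin (by rw [add_comm]; exact hsum)
  have h2 : Tendsto (fun r : ℝ => 1 - volume (S ∩ closedBall a r) / volume (closedBall a r))
      (𝓝[>] (0:ℝ)) (𝓝 0) := by
    have := ENNReal.Tendsto.sub (tendsto_const_nhds (x := (1:ℝ≥0∞))) h (Or.inl ENNReal.one_ne_top)
    simpa using this
  exact h2.congr' (EventuallyEq.symm key)

theorem stmt2 {m n k : ℕ} (hm : 1 ≤ m) (hmn : m < n) (hk : 1 ≤ k)
    (α : ℝ) (hα0 : 0 ≤ α) (hα1 : α ≤ 1)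
    (A : Set (EuclideanSpace ℝ (Fin m))) (hA : MeasurableSet A)
    (f : EuclideanSpace ℝ (Fin m) → EuclideanSpace ℝ (Fin (n - m)))
    (hf : Measurable f)
    (g : ℕ → EuclideanSpace ℝ (Fin m) → EuclideanSpace ℝ (Fin (n - m)))
    (hg : ∀ j, ClassKAlpha k α (g j))
    (hcover : volume (A \ ⋃ j : ℕ, {x | g j x = f x}) = 0) :
    ∀ᵐ a ∂(volume.restrict A), ApproxDiffAt k α A f a := by
  classical
  have hgcont : ∀ j, Continuous (g j) := fun j => (hg j).1.continuous
  set S : ℕ → Set (EuclideanSpace ℝ (Fin m)) := fun j => A ∩ {x | g j x = f x} with hSdef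
  have hSmeas : ∀ j, MeasurableSet (S j) := fun j =>
    hA.inter (measurableSet_eq_fun (hgcont j).measurable hf)
  have h1 : ∀ᵐ a ∂(volume.restrict A), ∃ j, g j a = f a := by
    rw [ae_iff]
    have hmeas : MeasurableSet (⋃ j, {x | g j x = f x}) :=
      MeasurableSet.iUnion fun j => measurableSet_eq_fun (hgcont j).measurable hf
    have : {a | ¬∃ j, g j a = f a} = (⋃ j, {x | g j x = f x})ᶜ := by
      ext a; simp [mem_iUnion]
    rw [this, Measure.restrict_apply hmeas.compl]
    refine le_antisymm (le_trans (le_of_eq ?_) hcover.le) zero_le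
    congr 1
    rw [Set.diff_eq, inter_comm]
  have h2 : ∀ᵐ a ∂(volume.restrict A), ∀ j : ℕ,
      Tendsto (fun r : ℝ => volume (S j ∩ closedBall a r) / volume (closedBall a r))
        (𝓝[>] (0:ℝ)) (𝓝 ((S j).indicator 1 a)) := by
    rw [ae_all_iff]
    intro j
    exact ae_restrict_of_ae
      (Besicovitch.ae_tendsto_measure_inter_div_of_measurableSet volume (hSmeas j))
  have h3 : ∀ᵐ a ∂(volume.restrict A), a ∈ A := ae_restrict_mem hA
  filter_upwards [h1, h2, h3] with a h1a h2a h3a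
  obtain ⟨j, hj⟩ := h1a
  have haS : a ∈ S j := ⟨h3a, hj⟩
  have hdens : Tendsto (fun r : ℝ => volume (S j ∩ closedBall a r) / volume (closedBall a r))
      (𝓝[>] (0:ℝ)) (𝓝 1) := by
    have := h2a j
    rwa [indicator_of_mem haS, Pi.one_apply] at this
  have hcompl : DensityZero (S j)ᶜ a := densityZero_compl (hSmeas j) hdens
  have hSsubA : S j ⊆ A := inter_subset_left
  refine ⟨densityZero_mono hcompl (by
    filter_upwards with r using
      inter_subset_inter_left _ (compl_subset_compl.mpr hSsubA)), ?_⟩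
  set P : EuclideanSpace ℝ (Fin m) → EuclideanSpace ℝ (Fin (n - m)) := fun x =>
    ∑ i ∈ Finset.range (k+1),
      (Nat.factorial i : ℝ)⁻¹ • iteratedFDeriv ℝ i (g j) a (fun _ => x - a) with hPdef
  have hPeq : ∀ y, P y = ∑ i ∈ Finset.range (k+1),
      (Nat.factorial i : ℝ)⁻¹ • iteratedFDeriv ℝ i (g j) a (fun _ => y - a) := fun _ => rfl
  have hPa : P a = f a := by
    rw [hPeq a]
    have : ∑ i ∈ Finset.range (k+1),
        (Nat.factorial i : ℝ)⁻¹ • iteratedFDeriv ℝ i (g j) a (fun _ => a - a) = g j a := by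
      rw [Finset.sum_eq_single_of_mem 0 (by simp)]
      · simp
      · intro i _ hi
        have : iteratedFDeriv ℝ i (g j) a (fun _ => a - a) = 0 := by
          apply ContinuousMultilinearMap.map_coord_zero _ (⟨0, Nat.pos_of_ne_zero hi⟩ : Fin i)
          simp
        rw [this, smul_zero]
    rw [this, hj]
  -- the key estimate generator
  have est : ∀ (C β : ℝ), 0 ≤ C → 0 ≤ β → ∀ δ > (0:ℝ),
      (∀ x ∈ ball a δ, ‖iteratedFDeriv ℝ k (g j) x - iteratedFDeriv ℝ k (g j) a‖
        ≤ C * ‖x - a‖ ^ β) →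
      DensityZero {x | x ∈ A ∧ C * ‖x - a‖ ^ ((k:ℝ) + β) < ‖f x - P x‖} a := by
    intro C β hC hβ δ hδ hb
    apply densityZero_mono hcompl
    filter_upwards [Ioo_mem_nhdsGT_of_mem (Set.left_mem_Ico.mpr hδ)] with r hr
    rintro x ⟨⟨hxA, hlt⟩, hxball⟩
    refine ⟨fun hxS => ?_, hxball⟩
    have hxb : x ∈ ball a δ := lt_of_le_of_lt (mem_closedBall.mp hxball) hr.2
    have := taylor_est k hk (g j) (hg j).1 a δ C β hC hβ hb x hxb
    rw [← hPeq x] at this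
    have hfx : f x = g j x := (hxS.2 : g j x = f x).symm
    rw [hfx] at hlt
    exact absurd this (not_le.mpr hlt)
  have hPoly : PolyDegLE k P := by
    have := polyDegLE_shift k
      (fun i => (Nat.factorial i : ℝ)⁻¹ • iteratedFDeriv ℝ i (g j) a) a
    obtain ⟨φ, hφ⟩ := this
    exact ⟨φ, fun x => by rw [hPeq x, ← hφ x]; simp⟩
  refine ⟨P, hPoly, fun _ => hPa, ?_, ?_⟩
  · -- α = 0
    intro hα ε hε
    have hcont : Continuous (iteratedFDeriv ℝ k (g j)) :=
      (hg j).1.continuous_iteratedFDeriv le_rfl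
    obtain ⟨δ, hδ, hδb⟩ := Metric.continuousAt_iff.mp (hcont.continuousAt (x := a)) ε hε
    have hb : ∀ x ∈ ball a δ, ‖iteratedFDeriv ℝ k (g j) x - iteratedFDeriv ℝ k (g j) a‖
        ≤ ε * ‖x - a‖ ^ (0:ℝ) := by
      intro x hx
      rw [Real.rpow_zero, mul_one]
      exact le_of_lt (by simpa [dist_eq_norm] using hδb (mem_ball.mp hx))
    have := est ε 0 hε.le le_rfl δ hδ hb
    simpa [add_zero] using this
  · -- α ≠ 0
    intro hα
    obtain ⟨U, hU, C, hHold⟩ := (hg j).2 hα a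
    obtain ⟨δ, hδ, hball⟩ := Metric.mem_nhds_iff.mp hU
    refine ⟨C, C.coe_nonneg, ?_⟩
    have hb : ∀ x ∈ ball a δ, ‖iteratedFDeriv ℝ k (g j) x - iteratedFDeriv ℝ k (g j) a‖
        ≤ C * ‖x - a‖ ^ α := by
      intro x hx
      have h1 := hHold.edist_le (hball hx) (mem_of_mem_nhds hU)
      rw [edist_dist, edist_dist] at h1
      have hcoe : ((α.toNNReal : ℝ)) = α := Real.coe_toNNReal α hα0
      rw [hcoe, ENNReal.ofReal_rpow_of_nonneg dist_nonneg hα0,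
        ← ENNReal.ofReal_coe_nnreal, ← ENNReal.ofReal_mul C.coe_nonneg] at h1
      have h2 := (ENNReal.ofReal_le_ofReal_iff (by positivity)).mp h1
      simpa [dist_eq_norm] using h2
    exact est C α C.coe_nonneg hα0 δ hδ hb
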